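/- Let (R,m) be a Noetherian local ring, n ≥ 2, and let J = (f_1,...,f_n) be a reduction of I = (f_1,...,f_n,f). The following are equivalent: (a) rt(I) = rn_J(I) + 1 (I has the expected relation type with respect to J); (b) for all d ≥ rn_J(I) + 2, the degree-d part of the first Koszul homology satisfies H_1(f_1t,...,f_nt; R(I))_d = ft · H_1(f_1t,...,f_nt; R(I))_{d-1}. -/

import Mathlib

open Ideal Submodule

variable {R : Type*} [CommRing R]

/-- The linear map `(a₁,…,aₘ) ↦ Σ aⱼ zⱼ`. -/
noncomputable def sumMul {m : ℕ} (z : Fin m → R) : (Fin m → R) →ₗ[R] R :=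
  ∑ j, (LinearMap.proj j : (Fin m → R) →ₗ[R] R).smulRight (z j)

/-- The degree-`d` cycles of the Koszul complex of the degree-one elements
`z₁t,…,zₘt` on the Rees algebra of `I`. -/
noncomputable def kosZ1 {m : ℕ} (I : Ideal R) (z : Fin m → R) (d : ℕ) :
    Submodule R (Fin m → R) :=
  (⨅ j : Fin m, Submodule.comap (LinearMap.proj j) ((I ^ (d - 1) : Ideal R) : Submodule R R))
    ⊓ LinearMap.ker (sumMul z)

/-- The degree-`d` boundaries of the Koszul complex of `z₁t,…,zₘt` on the Rees algebra
of `I`. -/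
noncomputable def kosB1 {m : ℕ} (I : Ideal R) (z : Fin m → R) (d : ℕ) :
    Submodule R (Fin m → R) :=
  Submodule.span R {v | ∃ j l : Fin m, ∃ u ∈ I ^ (d - 2),
    v = Pi.single l (z j * u) - Pi.single j (z l * u)}

/-- The degree-`d` component of the first Koszul homology `H₁(z₁t,…,zₘt; R(I))`;
for the full sequence of generators of `I` this computes the `d`-th module of effective
relations `E(I)_d`. -/
noncomputable abbrev kosH1 {m : ℕ} (I : Ideal R) (z : Fin m → R) (d : ℕ) :=
  ↥(kosZ1 I z d) ⧸ (Submodule.comap (kosZ1 I z d).subtype (kosB1 I z d))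

/-- The reduction number of `I` with respect to `J`. -/
noncomputable def reductionNumber (J I : Ideal R) : ℕ :=
  sInf {r | I ^ (r + 1) = J * I ^ r}

/-- The relation type of `I`, computed through the vanishing of the modules of effective
relations: the smallest `L ≥ 1` such that `E(I)_d = H₁(z₁t,…,zₘt; R(I))_d = 0` for all
`d ≥ L + 1`, where `z` is a system of generators of `I`. -/
noncomputable def relationTypeKoszul {m : ℕ} (I : Ideal R) (z : Fin m → R) : ℕ :=
  sInf {L | 1 ≤ L ∧ ∀ d : ℕ, L + 1 ≤ d → kosZ1 I z d ≤ kosB1 I z d}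

lemma sumMul_apply {m : ℕ} (z v : Fin m → R) : sumMul z v = ∑ j, v j * z j := by
  simp [sumMul, smul_eq_mul]

lemma sumMul_single {m : ℕ} (z : Fin m → R) (i : Fin m) (u : R) :
    sumMul z (Pi.single i u) = u * z i := by
  rw [sumMul_apply, Finset.sum_eq_single i]
  · simp
  · intro b _ hb; simp [Pi.single_eq_of_ne hb]
  · simp

lemma snoc_add {n : ℕ} (a b : Fin n → R) (x y : R) :
    (Fin.snoc a x + Fin.snoc b y : Fin (n+1) → R) = Fin.snoc (a+b) (x+y) :=
  funext fun i => Fin.lastCases (by simp) (fun j => by simp) i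

lemma snoc_smul {n : ℕ} (r : R) (a : Fin n → R) (x : R) :
    r • (Fin.snoc a x : Fin (n+1) → R) = Fin.snoc (r • a) (r * x) :=
  funext fun i => Fin.lastCases (by simp) (fun j => by simp) i

lemma snoc_sub {n : ℕ} (a b : Fin n → R) (x y : R) :
    (Fin.snoc a x - Fin.snoc b y : Fin (n+1) → R) = Fin.snoc (a-b) (x-y) :=
  funext fun i => Fin.lastCases (by simp) (fun j => by simp) i

lemma sumMul_snoc {n : ℕ} (g : Fin n → R) (f : R) (v : Fin n → R) (b : R) :
    sumMul (Fin.snoc g f) (Fin.snoc v b) = sumMul g v + b * f := by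
  simp [sumMul_apply, Fin.sum_univ_castSucc]

noncomputable def embL (n : ℕ) : (Fin n → R) →ₗ[R] (Fin (n+1) → R) where
  toFun v := Fin.snoc v 0
  map_add' a b := by
    show Fin.snoc (a+b) 0 = (Fin.snoc a 0 : Fin (n+1) → R) + Fin.snoc b 0
    rw [snoc_add, add_zero]
  map_smul' r a := by show Fin.snoc (r • a) 0 = r • (Fin.snoc a 0 : Fin (n+1) → R)
                      rw [snoc_smul, mul_zero]

lemma embL_apply {n : ℕ} (v : Fin n → R) : embL n v = Fin.snoc v 0 := rfl

lemma embL_single {n : ℕ} (i : Fin n) (x : R) :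
    embL n (Pi.single i x) = Pi.single (Fin.castSucc i) x := by
  funext j
  refine Fin.lastCases ?_ (fun j => ?_) j
  · simp [embL_apply, Pi.single_eq_of_ne (Fin.castSucc_lt_last i).ne']
  · simp [embL_apply, Pi.single_apply, Fin.castSucc_inj]

noncomputable def phiL {n : ℕ} (g : Fin n → R) (f : R) :
    (Fin n → R) →ₗ[R] (Fin (n+1) → R) where
  toFun c := Fin.snoc (f • c) (-(sumMul g c))
  map_add' a b := by
    show _ = (Fin.snoc (f • a) (-(sumMul g a)) : Fin (n+1) → R) + Fin.snoc (f • b) (-(sumMul g b))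
    rw [snoc_add]; simp [smul_add, neg_add, add_comm]
  map_smul' r a := by
    show Fin.snoc (f • r • a) (-(sumMul g (r • a))) = r • (Fin.snoc (f • a) (-(sumMul g a)) : Fin (n+1) → R)
    rw [snoc_smul, map_smul, smul_comm r f a, smul_eq_mul, mul_neg]

lemma phiL_apply {n : ℕ} (g : Fin n → R) (f : R) (c : Fin n → R) :
    phiL g f c = Fin.snoc (f • c) (-(sumMul g c)) := rfl

lemma mem_kosZ1 {m : ℕ} {I : Ideal R} {z : Fin m → R} {d : ℕ} {v : Fin m → R} :
    v ∈ kosZ1 I z d ↔ (∀ j, v j ∈ I ^ (d-1)) ∧ sumMul z v = 0 := by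
  simp [kosZ1, Submodule.mem_inf, Submodule.mem_iInf, LinearMap.mem_ker]

/-- the components submodule -/
noncomputable def compS (m : ℕ) (I : Ideal R) (k : ℕ) : Submodule R (Fin m → R) :=
  ⨅ j : Fin m, Submodule.comap (LinearMap.proj j) ((I ^ k : Ideal R) : Submodule R R)

lemma mem_compS {m : ℕ} {I : Ideal R} {k : ℕ} {v : Fin m → R} :
    v ∈ compS m I k ↔ ∀ j, v j ∈ I ^ k := by
  simp [compS, Submodule.mem_iInf]

/-- extraction: an element of `span(range g) * K` is `∑ gᵢ * cᵢ` with `cᵢ ∈ K`. -/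
lemma extract {n : ℕ} (g : Fin n → R) {K : Ideal R} {b : R}
    (hb : b ∈ Ideal.span (Set.range g) * K) :
    ∃ c : Fin n → R, (∀ i, c i ∈ K) ∧ b = ∑ i, g i * c i := by
  refine Submodule.mul_induction_on hb ?_ ?_
  · intro a ha u hu
    obtain ⟨c, hc⟩ := (Finsupp.mem_span_range_iff_exists_finsupp).1 ha
    refine ⟨fun i => c i * u, fun i => Ideal.mul_mem_left _ _ hu, ?_⟩
    have : a = ∑ i, c i * g i := by
      rw [← hc, Finsupp.sum_fintype] <;> simp [smul_eq_mul]
    rw [this, Finset.sum_mul]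
    exact Finset.sum_congr rfl fun i _ => by ring
  · rintro x y ⟨c1, h1, rfl⟩ ⟨c2, h2, rfl⟩
    exact ⟨fun i => c1 i + c2 i, fun i => add_mem (h1 i) (h2 i),
      by rw [← Finset.sum_add_distrib]; exact Finset.sum_congr rfl fun i _ => by ring⟩

section decomp

variable {n : ℕ} (g : Fin n → R) (f : R) (I : Ideal R) (d : ℕ)

lemma phiL_eq_sum (c : Fin n → R) :
    phiL g f c = ∑ i, (Pi.single (Fin.castSucc i) (f * c i)
      - Pi.single (Fin.last n) (g i * c i)) := by
  funext j
  rw [Finset.sum_apply]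
  refine Fin.lastCases ?_ (fun j => ?_) j
  · simp [phiL_apply, Pi.single_eq_of_ne (Fin.castSucc_lt_last _).ne',
      sumMul_apply, Pi.single_apply, mul_comm]
  · rw [phiL_apply]
    simp only [Pi.sub_apply, Pi.single_apply, Fin.castSucc_inj,
      (Fin.castSucc_lt_last _).ne, if_false, sub_zero]
    simp [Fin.snoc_castSucc, Finset.sum_ite_eq']

lemma phi_mem_B {c : Fin n → R} (hc : c ∈ compS n I (d-2)) :
    phiL g f c ∈ kosB1 I (Fin.snoc g f) d := by
  rw [phiL_eq_sum]
  refine Submodule.sum_mem _ fun i _ => Submodule.subset_span ?_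
  exact ⟨Fin.last n, Fin.castSucc i, c i, mem_compS.1 hc i, by
    simp [Fin.snoc_castSucc, Fin.snoc_last]⟩

lemma emb_B {w : Fin n → R} (hw : w ∈ kosB1 I g d) :
    embL n w ∈ kosB1 I (Fin.snoc g f) d := by
  refine Submodule.span_induction ?_ (by simp) (fun x y _ _ hx hy => by
    rw [map_add]; exact add_mem hx hy)
    (fun r x _ hx => by rw [map_smul]; exact Submodule.smul_mem _ _ hx) hw
  rintro v ⟨j, l, u, hu, rfl⟩
  rw [map_sub, embL_single, embL_single]
  exact Submodule.subset_span ⟨Fin.castSucc j, Fin.castSucc l, u, hu, by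
    simp [Fin.snoc_castSucc]⟩

lemma B_snoc_le :
    kosB1 I (Fin.snoc g f) d ≤
      Submodule.map (embL n) (kosB1 I g d) ⊔ Submodule.map (phiL g f) (compS n I (d-2)) := by
  rw [kosB1, Submodule.span_le]
  rintro v ⟨j, l, u, hu, rfl⟩
  refine Fin.lastCases ?_ (fun j => ?_) j <;> refine Fin.lastCases ?_ (fun l => ?_) l
  · -- j = last, l = last
    simp only [sub_self]
    exact zero_mem _
  · -- j = last, l = castSucc l
    refine Submodule.mem_sup_right ⟨Pi.single l u, ?_, ?_⟩
    · rw [SetLike.mem_coe, mem_compS]; intro i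
      rcases eq_or_ne i l with rfl | h
      · simpa using hu
      · simp [Pi.single_eq_of_ne h]
    · rw [phiL_eq_sum]
      rw [Finset.sum_eq_single l]
      · simp [Pi.single_eq_same, Fin.snoc_castSucc, Fin.snoc_last]
      · intro b _ hb; simp [Pi.single_eq_of_ne hb]
      · simp
  · -- j = castSucc j, l = last
    refine Submodule.mem_sup_right ⟨Pi.single j (-u), ?_, ?_⟩
    · rw [SetLike.mem_coe, mem_compS]; intro i
      rcases eq_or_ne i j with rfl | h
      · simpa using neg_mem hu
      · simp [Pi.single_eq_of_ne h]
    · rw [phiL_eq_sum]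
      rw [Finset.sum_eq_single j]
      · simp only [Pi.single_eq_same, Fin.snoc_castSucc, Fin.snoc_last,
          mul_neg, Pi.single_neg]
        abel
      · intro b _ hb; simp [Pi.single_eq_of_ne hb]
      · simp
  · -- both castSucc
    refine Submodule.mem_sup_left ⟨Pi.single l (g j * u) - Pi.single j (g l * u),
      Submodule.subset_span ⟨j, l, u, hu, rfl⟩, ?_⟩
    rw [map_sub, embL_single, embL_single, Fin.snoc_castSucc, Fin.snoc_castSucc]

lemma mem_pow_pred (hf : f ∈ I) (hd : 2 ≤ d) {x : R} (hx : x ∈ I ^ (d-2)) :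
    f * x ∈ I ^ (d-1) := by
  have h : I ^ (d-1) = I * I ^ (d-2) := by
    rw [← pow_succ']
    congr 1
    omega
  rw [h]
  exact Ideal.mul_mem_mul hf hx

lemma Z_emb {w : Fin n → R} (hw : w ∈ kosZ1 I g d) :
    embL n w ∈ kosZ1 I (Fin.snoc g f) d := by
  rw [mem_kosZ1] at hw ⊢
  refine ⟨fun j => ?_, ?_⟩
  · refine Fin.lastCases ?_ (fun j => ?_) j
    · simp [embL_apply]
    · simpa [embL_apply, Fin.snoc_castSucc] using hw.1 j
  · rw [embL_apply, sumMul_snoc, hw.2, zero_mul, add_zero]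

lemma smul_Z (hf : f ∈ I) (hd : 2 ≤ d) {z : Fin n → R} (hz : z ∈ kosZ1 I g (d-1)) :
    f • z ∈ kosZ1 I g d := by
  rw [mem_kosZ1] at hz ⊢
  refine ⟨fun j => ?_, ?_⟩
  · have : z j ∈ I ^ (d-2) := by
      have h : (d:ℕ) - 1 - 1 = d - 2 := by omega
      simpa [h] using hz.1 j
    exact mem_pow_pred f I d hf hd this
  · rw [map_smul, hz.2, smul_zero]

lemma single_mem_pow {m : ℕ} {K : Ideal R} {x : R} (hx : x ∈ K) (i j : Fin m) :
    (Pi.single i x : Fin m → R) j ∈ K := by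
  rcases eq_or_ne i j with rfl | h
  · simpa using hx
  · simp [Pi.single_eq_of_ne h.symm]

lemma B_le_Z (hg : ∀ i, g i ∈ I) (hd : 2 ≤ d) : kosB1 I g d ≤ kosZ1 I g d := by
  rw [kosB1, Submodule.span_le]
  rintro v ⟨j, l, u, hu, rfl⟩
  rw [SetLike.mem_coe, mem_kosZ1]
  refine ⟨fun k => sub_mem (single_mem_pow (mem_pow_pred (g j) I d (hg j) hd hu) _ _)
      (single_mem_pow (mem_pow_pred (g l) I d (hg l) hd hu) _ _), ?_⟩
  rw [map_sub, sumMul_single, sumMul_single]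
  ring

lemma phiL_eq_embL {c : Fin n → R} (hc : sumMul g c = 0) :
    phiL g f c = embL n (f • c) := by
  rw [phiL_apply, hc, neg_zero, embL_apply]

lemma embL_inj : Function.Injective (embL n (R := R)) := by
  intro a b h
  funext i
  have := congrFun h (Fin.castSucc i)
  simpa [embL_apply, Fin.snoc_castSucc] using this

lemma core (hf : f ∈ I) (hg : ∀ i, g i ∈ I) (hd : 2 ≤ d)
    (hpow : I ^ (d-1) = Ideal.span (Set.range g) * I ^ (d-2)) :
    (kosZ1 I (Fin.snoc g f) d ≤ kosB1 I (Fin.snoc g f) d) ↔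
    (kosZ1 I g d =
      Submodule.map (f • (LinearMap.id : (Fin n → R) →ₗ[R] (Fin n → R))) (kosZ1 I g (d - 1))
        ⊔ kosB1 I g d) := by
  have hd12 : (d:ℕ) - 1 - 1 = d - 2 := by omega
  constructor
  · intro hZB
    refine le_antisymm ?_ (sup_le ?_ (B_le_Z g I d hg hd))
    · intro w hw
      have h1 : embL n w ∈ kosZ1 I (Fin.snoc g f) d := Z_emb g f I d hw
      have h2 := B_snoc_le g f I d (hZB h1)
      rcases Submodule.mem_sup.1 h2 with ⟨x, hx, y, hy, hxy⟩
      rcases hx with ⟨β, hβ, rfl⟩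
      rcases hy with ⟨c, hc, rfl⟩
      -- last coordinate gives `sumMul g c = 0`
      have hlast := congrFun hxy (Fin.last n)
      have hc0 : sumMul g c = 0 := by
        simp only [embL_apply, phiL_apply, Pi.add_apply, Fin.snoc_last] at hlast
        linear_combination -hlast
      have hxyz : embL n w = embL n (β + f • c) := by
        rw [map_add, ← phiL_eq_embL g f hc0, hxy]
      have hw2 : w = β + f • c := embL_inj hxyz
      have hcZ : c ∈ kosZ1 I g (d-1) := by
        rw [mem_kosZ1]
        exact ⟨fun j => by rw [hd12]; exact mem_compS.1 hc j, hc0⟩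
      rw [Submodule.mem_sup]
      exact ⟨f • c, ⟨c, hcZ, by simp⟩, β, hβ, by rw [hw2]; ring⟩
    · rintro x ⟨z, hz, rfl⟩
      simpa using smul_Z g f I d hf hd hz
  · intro hRHS v hv
    rw [mem_kosZ1] at hv
    obtain ⟨hcomp, hker⟩ := hv
    have hb : v (Fin.last n) ∈ Ideal.span (Set.range g) * I ^ (d-2) := by
      rw [← hpow]; exact hcomp _
    obtain ⟨c, hcK, hbc⟩ := extract g hb
    have h1 : sumMul g c = v (Fin.last n) := by
      rw [sumMul_apply, hbc]
      exact Finset.sum_congr rfl fun i _ => mul_comm _ _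
    have hveq : embL n (Fin.init v + f • c) - phiL g f c = v := by
      rw [embL_apply, phiL_apply, snoc_sub, add_sub_cancel_right, zero_sub, neg_neg, h1,
        Fin.snoc_init_self]
    have hw : (Fin.init v + f • c) ∈ kosZ1 I g d := by
      rw [mem_kosZ1]
      constructor
      · intro j
        refine add_mem ?_ (mem_pow_pred f I d hf hd (hcK j))
        exact hcomp (Fin.castSucc j)
      · have hs := sumMul_snoc g f (Fin.init v) (v (Fin.last n))
        rw [Fin.snoc_init_self, hker] at hs
        rw [map_add, map_smul, smul_eq_mul, h1]
        linear_combination -hs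
    rw [hRHS, Submodule.mem_sup] at hw
    rcases hw with ⟨x, hx, y, hy, hxy⟩
    rcases hx with ⟨z, hz, rfl⟩
    have hzC : z ∈ compS n I (d-2) := by
      rw [mem_compS]
      intro j
      rw [← hd12]
      exact (mem_kosZ1.1 hz).1 j
    have hz0 : sumMul g z = 0 := (mem_kosZ1.1 hz).2
    have hcC : c ∈ compS n I (d-2) := mem_compS.2 hcK
    have : v = phiL g f z + embL n y - phiL g f c := by
      rw [← hveq, ← hxy]
      rw [phiL_eq_embL g f hz0, map_add]
      simp
    rw [this]
    exact sub_mem (add_mem (phi_mem_B g f I d hzC) (emb_B g f I d hy)) (phi_mem_B g f I d hcC)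

lemma pow_le_aux (hI : I = Ideal.span (Set.range g) ⊔ Ideal.span {f}) (m : ℕ) :
    I ^ (m+1) ≤ Ideal.span (Set.range g) * I ^ m + Ideal.span {f ^ (m+1)} := by
  set J := Ideal.span (Set.range g) with hJ
  have hfI : f ∈ I := by
    rw [hI]; exact Submodule.mem_sup_right (Ideal.mem_span_singleton_self f)
  induction m with
  | zero => rw [pow_zero, mul_one, pow_one, pow_one, hI, Submodule.add_eq_sup]
  | succ m ih =>
    have h1 : I ^ (m+1+1) = I ^ (m+1) * I := pow_succ I (m+1)
    rw [h1, Submodule.add_eq_sup]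
    calc I ^ (m+1) * I ≤ (J * I ^ m + Ideal.span {f ^ (m+1)}) * I :=
          Ideal.mul_mono_left ih
      _ = J * I ^ (m+1) + Ideal.span {f ^ (m+1)} * I := by
          rw [add_mul, mul_assoc, ← pow_succ]
      _ ≤ J * I ^ (m+1) ⊔ Ideal.span {f ^ (m+1+1)} := by
          rw [Submodule.add_eq_sup]
          refine sup_le le_sup_left ?_
          conv_lhs => rw [hI]
          rw [Ideal.mul_sup]
          refine sup_le (le_sup_of_le_left ?_) (le_sup_of_le_right ?_)
          · rw [mul_comm]
            refine Ideal.mul_mono_right ?_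
            rw [Ideal.span_singleton_le_iff_mem]
            exact pow_mem_pow hfI _
          · rw [Ideal.span_singleton_mul_span_singleton, ← pow_succ]

lemma key3 (hI : I = Ideal.span (Set.range g) ⊔ Ideal.span {f}) (hd : 2 ≤ d)
    (hpowd : I ^ d = Ideal.span (Set.range g) * I ^ (d-1))
    (hZB : kosZ1 I (Fin.snoc g f) d ≤ kosB1 I (Fin.snoc g f) d) :
    I ^ (d-1) = Ideal.span (Set.range g) * I ^ (d-2) := by
  set J := Ideal.span (Set.range g) with hJ
  have hfI : f ∈ I := by
    rw [hI]; exact Submodule.mem_sup_right (Ideal.mem_span_singleton_self f)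
  have hfd : f ^ d ∈ J * I ^ (d-1) := by rw [← hpowd]; exact pow_mem_pow hfI d
  obtain ⟨a, haK, hfa⟩ := extract g hfd
  have hsa : sumMul g a = f ^ d := by
    rw [sumMul_apply, hfa]
    exact Finset.sum_congr rfl fun i _ => mul_comm _ _
  have hvZ : (Fin.snoc a (-(f ^ (d-1))) : Fin (n+1) → R) ∈ kosZ1 I (Fin.snoc g f) d := by
    rw [mem_kosZ1]
    constructor
    · intro j
      refine Fin.lastCases ?_ (fun j => ?_) j
      · rw [Fin.snoc_last]
        exact neg_mem (pow_mem_pow hfI _)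
      · rw [Fin.snoc_castSucc]
        exact haK j
    · rw [sumMul_snoc, hsa]
      have : f ^ (d-1) * f = f ^ d := by
        rw [← pow_succ]
        congr 1
        omega
      linear_combination -this
  have h2 := B_snoc_le g f I d (hZB hvZ)
  rcases Submodule.mem_sup.1 h2 with ⟨x, hx, y, hy, hxy⟩
  rcases hx with ⟨β, hβ, rfl⟩
  rcases hy with ⟨c, hc, rfl⟩
  have hlast := congrFun hxy (Fin.last n)
  simp only [embL_apply, phiL_apply, Pi.add_apply, Fin.snoc_last] at hlast
  have hfmem : f ^ (d-1) ∈ J * I ^ (d-2) := by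
    have h3 : f ^ (d-1) = sumMul g c := by linear_combination hlast
    rw [h3, sumMul_apply]
    refine Submodule.sum_mem _ fun i _ => ?_
    rw [mul_comm (c i) (g i)]
    exact Ideal.mul_mem_mul (Submodule.subset_span (Set.mem_range_self i)) (mem_compS.1 hc i)
  refine le_antisymm ?_ ?_
  · have h4 := pow_le_aux g f I hI (d-2)
    have h5 : (d:ℕ) - 2 + 1 = d - 1 := by omega
    rw [h5] at h4
    refine le_trans h4 ?_
    rw [← hJ]
    have h6 : Ideal.span {f ^ (d-1)} ≤ J * I ^ (d-2) := by
      rw [Ideal.span_singleton_le_iff_mem]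
      exact hfmem
    calc J * I ^ (d-2) + Ideal.span {f ^ (d-1)} ≤ J * I ^ (d-2) + J * I ^ (d-2) :=
        add_le_add le_rfl h6
      _ = J * I ^ (d-2) := by rw [Submodule.add_eq_sup, sup_idem]
  · calc J * I ^ (d-2) ≤ I * I ^ (d-2) :=
        Ideal.mul_mono_left (by rw [hI]; exact le_sup_left)
      _ = I ^ (d-1) := by rw [← pow_succ']; congr 1; omega

end decomp

theorem stmt11 {R : Type*} [CommRing R] [IsNoetherianRing R] [IsLocalRing R]
    {n : ℕ} (hn : 2 ≤ n) (g : Fin n → R) (f : R) (J I : Ideal R)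
    (hJ : J = Ideal.span (Set.range g)) (hI : I = J ⊔ Ideal.span {f})
    (hred : ∃ r : ℕ, I ^ (r + 1) = J * I ^ r) :
    relationTypeKoszul I (Fin.snoc g f : Fin (n + 1) → R) = reductionNumber J I + 1 ↔
    (∀ d : ℕ, reductionNumber J I + 2 ≤ d →
      kosZ1 I g d =
        Submodule.map (f • (LinearMap.id : (Fin n → R) →ₗ[R] (Fin n → R)))
          (kosZ1 I g (d - 1)) ⊔ kosB1 I g d) := by
  subst hJ
  set J := Ideal.span (Set.range g) with hJ
  set rn := reductionNumber J I with hrn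
  have hfI : f ∈ I := by
    rw [hI]; exact Submodule.mem_sup_right (Ideal.mem_span_singleton_self f)
  have hgI : ∀ i, g i ∈ I := fun i => by
    rw [hI]
    exact Submodule.mem_sup_left (Submodule.subset_span (Set.mem_range_self i))
  have hmem : I ^ (rn + 1) = J * I ^ rn := Nat.sInf_mem hred
  have hmin : ∀ r, I ^ (r + 1) = J * I ^ r → rn ≤ r := fun r h => Nat.sInf_le h
  have hstab0 : ∀ k, I ^ (rn + 1 + k) = J * I ^ (rn + k) := by
    intro k
    induction k with
    | zero => simpa using hmem
    | succ k ih =>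
      have e1 : rn + 1 + (k + 1) = (rn + 1 + k) + 1 := by omega
      rw [e1, pow_succ, ih, mul_assoc, ← pow_succ, Nat.add_assoc]
  have hstab : ∀ d, rn + 1 ≤ d → I ^ d = J * I ^ (d - 1) := by
    intro d hd
    have h := hstab0 (d - (rn + 1))
    have e1 : rn + 1 + (d - (rn + 1)) = d := by omega
    have e2 : rn + (d - (rn + 1)) = d - 1 := by omega
    rwa [e1, e2] at h
  set S2 : Set ℕ := {L | 1 ≤ L ∧ ∀ d : ℕ, L + 1 ≤ d →
      kosZ1 I (Fin.snoc g f) d ≤ kosB1 I (Fin.snoc g f) d} with hS2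
  have hRT : relationTypeKoszul I (Fin.snoc g f : Fin (n + 1) → R) = sInf S2 := rfl
  have hcore : ∀ d, rn + 2 ≤ d →
      ((kosZ1 I (Fin.snoc g f) d ≤ kosB1 I (Fin.snoc g f) d) ↔
        (kosZ1 I g d =
          Submodule.map (f • (LinearMap.id : (Fin n → R) →ₗ[R] (Fin n → R)))
            (kosZ1 I g (d - 1)) ⊔ kosB1 I g d)) := by
    intro d hd
    refine core g f I d hfI hgI (by omega) ?_
    have h := hstab (d - 1) (by omega)
    have e : (d : ℕ) - 1 - 1 = d - 2 := by omega
    rwa [e] at h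
  have hrnnot : rn ∉ S2 := by
    rintro ⟨h1, h2⟩
    have hZB := h2 (rn + 1) (le_refl _)
    have hpowd : I ^ (rn + 1) = J * I ^ (rn + 1 - 1) := by simpa using hmem
    have hk := key3 g f I (rn + 1) hI (by omega) hpowd hZB
    have e1 : rn + 1 - 1 = rn := by omega
    have e2 : rn + 1 - 2 = rn - 1 := by omega
    rw [e1, e2] at hk
    have : rn ≤ rn - 1 := by
      refine hmin (rn - 1) ?_
      have e3 : rn - 1 + 1 = rn := by omega
      rw [e3]
      exact hk
    omega
  rw [hRT]
  constructor
  · intro hL d hd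
    have hne2 : S2.Nonempty := by
      by_contra h
      rw [Set.not_nonempty_iff_eq_empty] at h
      rw [h, Nat.sInf_empty] at hL
      omega
    have hmem2 : rn + 1 ∈ S2 := by rw [← hL]; exact Nat.sInf_mem hne2
    exact (hcore d hd).1 (hmem2.2 d hd)
  · intro hRHS
    have hmem2 : rn + 1 ∈ S2 := ⟨by omega, fun d hd => (hcore d hd).2 (hRHS d hd)⟩
    have hle : sInf S2 ≤ rn + 1 := Nat.sInf_le hmem2
    have hgt : ¬ sInf S2 ≤ rn := by
      intro h
      have hsmem := Nat.sInf_mem (⟨rn + 1, hmem2⟩ : S2.Nonempty)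
      exact hrnnot ⟨le_trans hsmem.1 h, fun d hd => hsmem.2 d (by omega)⟩
    omega
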